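/- Let N = 2 and q = −1. The module A_{1,α,b} decomposes as a direct sum of the two submodules A'_{1,α,b} = span{v_k : k ∈ Z^2 \ 2Z^2} and A''_{1,α,b} = span{v_k : k ∈ 2Z^2}; moreover every element x^m with m ∈ Z^2 \ 2Z^2 acts as zero on A''_{1,α,b}. -/
import Mathlib


/-- For `N = 2`, `q = −1`: the module `A_{1,α,b}` (with basis `v_k`, `k ∈ ℤ²`,
`x^m v_k = ((−1)^(m₂k₁) − (−1)^(m₁k₂)) v_(m+k)` for `m ∈ ℤ² \ 2ℤ²`, and
`(x^n∂) v_k = ⟨∂, α+k+bn⟩ v_(n+k)` for `n ∈ 2ℤ²`) decomposes as the direct sum of the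
two submodules `A' = span{v_k : k ∉ 2ℤ²}` and `A'' = span{v_k : k ∈ 2ℤ²}`, and every
`x^m` with `m ∉ 2ℤ²` acts as zero on `A''`. -/

lemma aux_zpow_eq {a c : ℤ} (h : (2:ℤ) ∣ a - c) : (-1 : ℂ) ^ a = (-1 : ℂ) ^ c := by
  obtain ⟨e, he⟩ := h
  have : a = c + 2 * e := by linarith
  rw [this, zpow_add₀ (by norm_num : (-1:ℂ) ≠ 0), zpow_mul]
  norm_num

theorem stmt_6 (α : ℂ × ℂ) (b : ℂ)
    (V : Type*) [AddCommGroup V] [Module ℂ V] (v : ℤ × ℤ → V)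
    (hli : LinearIndependent ℂ v)
    (hspan : Submodule.span ℂ (Set.range v) = ⊤)
    (X : ℤ × ℤ → Module.End ℂ V) (T : ℤ × ℤ → ℂ × ℂ → Module.End ℂ V)
    (hX : ∀ m k : ℤ × ℤ, ¬((2 : ℤ) ∣ m.1 ∧ (2 : ℤ) ∣ m.2) →
      X m (v k) = ((-1 : ℂ) ^ (m.2 * k.1) - (-1 : ℂ) ^ (m.1 * k.2)) • v (m + k))
    (hT : ∀ n k : ℤ × ℤ, (2 : ℤ) ∣ n.1 → (2 : ℤ) ∣ n.2 → ∀ d : ℂ × ℂ,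
      T n d (v k) =
        (d.1 * (α.1 + (k.1 : ℂ) + b * (n.1 : ℂ)) + d.2 * (α.2 + (k.2 : ℂ) + b * (n.2 : ℂ)))
          • v (n + k)) :
    IsCompl
        (Submodule.span ℂ (v '' {k : ℤ × ℤ | ¬((2 : ℤ) ∣ k.1 ∧ (2 : ℤ) ∣ k.2)}))
        (Submodule.span ℂ (v '' {k : ℤ × ℤ | (2 : ℤ) ∣ k.1 ∧ (2 : ℤ) ∣ k.2})) ∧
      (∀ m : ℤ × ℤ, ¬((2 : ℤ) ∣ m.1 ∧ (2 : ℤ) ∣ m.2) →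
        ∀ u ∈ Submodule.span ℂ (v '' {k : ℤ × ℤ | ¬((2 : ℤ) ∣ k.1 ∧ (2 : ℤ) ∣ k.2)}),
          X m u ∈ Submodule.span ℂ (v '' {k : ℤ × ℤ | ¬((2 : ℤ) ∣ k.1 ∧ (2 : ℤ) ∣ k.2)})) ∧
      (∀ n : ℤ × ℤ, (2 : ℤ) ∣ n.1 → (2 : ℤ) ∣ n.2 → ∀ d : ℂ × ℂ,
        ∀ u ∈ Submodule.span ℂ (v '' {k : ℤ × ℤ | ¬((2 : ℤ) ∣ k.1 ∧ (2 : ℤ) ∣ k.2)}),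
          T n d u ∈ Submodule.span ℂ (v '' {k : ℤ × ℤ | ¬((2 : ℤ) ∣ k.1 ∧ (2 : ℤ) ∣ k.2)})) ∧
      (∀ n : ℤ × ℤ, (2 : ℤ) ∣ n.1 → (2 : ℤ) ∣ n.2 → ∀ d : ℂ × ℂ,
        ∀ u ∈ Submodule.span ℂ (v '' {k : ℤ × ℤ | (2 : ℤ) ∣ k.1 ∧ (2 : ℤ) ∣ k.2}),
          T n d u ∈ Submodule.span ℂ (v '' {k : ℤ × ℤ | (2 : ℤ) ∣ k.1 ∧ (2 : ℤ) ∣ k.2})) ∧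
      (∀ m : ℤ × ℤ, ¬((2 : ℤ) ∣ m.1 ∧ (2 : ℤ) ∣ m.2) →
        ∀ u ∈ Submodule.span ℂ (v '' {k : ℤ × ℤ | (2 : ℤ) ∣ k.1 ∧ (2 : ℤ) ∣ k.2}),
          X m u = 0) := by

  set S1 : Set V := v '' {k : ℤ × ℤ | ¬((2 : ℤ) ∣ k.1 ∧ (2 : ℤ) ∣ k.2)} with hS1
  set S2 : Set V := v '' {k : ℤ × ℤ | (2 : ℤ) ∣ k.1 ∧ (2 : ℤ) ∣ k.2} with hS2
  refine ⟨⟨?_, ?_⟩, ?_, ?_, ?_, ?_⟩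
  · exact hli.disjoint_span_image (by
      rw [Set.disjoint_left]; intro k hk hk'; exact hk hk')
  · rw [codisjoint_iff, ← Submodule.span_union, ← Set.image_union]
    have : ({k : ℤ × ℤ | ¬((2 : ℤ) ∣ k.1 ∧ (2 : ℤ) ∣ k.2)} ∪
        {k : ℤ × ℤ | (2 : ℤ) ∣ k.1 ∧ (2 : ℤ) ∣ k.2}) = Set.univ := by
      ext k; simp; omega
    rw [this, Set.image_univ, hspan]
  · intro m hm u hu
    have hmap : Submodule.map (X m) (Submodule.span ℂ S1) ≤ Submodule.span ℂ S1 := by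
      rw [Submodule.map_span_le]
      rintro _ ⟨k, hk, rfl⟩
      rw [hX m k hm]
      by_cases hmk : (2 : ℤ) ∣ (m + k).1 ∧ (2 : ℤ) ∣ (m + k).2
      · have h1 : (2:ℤ) ∣ m.2 * k.1 - m.1 * k.2 := by
          obtain ⟨e1, he1⟩ := hmk.1
          obtain ⟨e2, he2⟩ := hmk.2
          have hk1 : k.1 = 2 * e1 - m.1 := by have := he1; simp [Prod.fst_add] at this; linarith
          have hk2 : k.2 = 2 * e2 - m.2 := by have := he2; simp [Prod.snd_add] at this; linarith
          rw [hk1, hk2]; ring_nf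
          exact ⟨m.2 * e1 - m.1 * e2, by ring⟩
        rw [aux_zpow_eq h1, sub_self, zero_smul]
        exact Submodule.zero_mem _
      · exact Submodule.smul_mem _ _ (Submodule.subset_span ⟨m + k, hmk, rfl⟩)
    exact hmap ⟨u, hu, rfl⟩
  · intro n hn1 hn2 d u hu
    have hmap : Submodule.map (T n d) (Submodule.span ℂ S1) ≤ Submodule.span ℂ S1 := by
      rw [Submodule.map_span_le]
      rintro _ ⟨k, hk, rfl⟩
      rw [hT n k hn1 hn2 d]
      refine Submodule.smul_mem _ _ (Submodule.subset_span ⟨n + k, ?_, rfl⟩)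
      simp only [Set.mem_setOf_eq] at hk ⊢
      intro h
      exact hk ⟨(Int.dvd_add_right hn1).mp h.1, (Int.dvd_add_right hn2).mp h.2⟩
    exact hmap ⟨u, hu, rfl⟩
  · intro n hn1 hn2 d u hu
    have hmap : Submodule.map (T n d) (Submodule.span ℂ S2) ≤ Submodule.span ℂ S2 := by
      rw [Submodule.map_span_le]
      rintro _ ⟨k, hk, rfl⟩
      rw [hT n k hn1 hn2 d]
      exact Submodule.smul_mem _ _ (Submodule.subset_span
        ⟨n + k, ⟨dvd_add hn1 hk.1, dvd_add hn2 hk.2⟩, rfl⟩)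
    exact hmap ⟨u, hu, rfl⟩
  · intro m hm u hu
    have hker : Submodule.span ℂ S2 ≤ LinearMap.ker (X m) := by
      rw [Submodule.span_le]
      rintro _ ⟨k, hk, rfl⟩
      rw [SetLike.mem_coe, LinearMap.mem_ker, hX m k hm]
      obtain ⟨c1, hc1⟩ := hk.1
      obtain ⟨c2, hc2⟩ := hk.2
      have e1 : (-1 : ℂ) ^ (m.2 * k.1) = 1 :=
        Even.neg_one_zpow ⟨m.2 * c1, by rw [hc1]; ring⟩
      have e2 : (-1 : ℂ) ^ (m.1 * k.2) = 1 :=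
        Even.neg_one_zpow ⟨m.1 * c2, by rw [hc2]; ring⟩
      rw [e1, e2, sub_self, zero_smul]
    exact hker hu
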